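/- Let γ ≥ 1, μ > 0, k > 0, s ∈ ℝ, A ∈ ℝ, and let P : ℝ → (0, ∞) be a bounded C³ function with bounded first and second derivatives and with inf P > 0; set J = sP − A, f₁ = J²/P² − γP^{γ−1} and f₂ = s − 2J/P. Let λ ∈ ℂ with λ ≠ 0, and let ρ̃ : ℝ → ℂ be C³ with ρ̃, ρ̃', ρ̃'', ρ̃''' ∈ L²(ℝ) and m̃ : ℝ → ℂ be C² with m̃, m̃', m̃'' ∈ L²(ℝ), satisfying for all y ∈ ℝ the linearized eigenvalue equations sρ̃' − m̃' = λρ̃ and sm̃' + ((J²/P²)ρ̃)' − ((2J/P)m̃)' − γ(P^{γ−1}ρ̃)' + μm̃'' + (k²/2)ρ̃''' − 2k²((√P)'(ρ̃/√P)')' = λm̃. Define ρ = (sρ̃ − m̃)/λ and m = (f₁ρ̃ + f₂m̃ + μm̃' + (k²/2)ρ̃'' − 2k²(√P)'(ρ̃/√P)')/λ. Then ρ and m belong to L²(ℝ), ρ' = ρ̃ and m' = m̃ on ℝ, and (ρ, m) satisfies the integrated eigenvalue system: λρ = sρ' − m' and λm = f₁ρ' + f₂m' + μm'' + (k²/2)ρ'''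 − 2k²(√P)'(ρ'/√P)' on ℝ. -/

import Mathlib

open MeasureTheory

lemma mulL2 {c f : ℝ → ℂ} (hc : Continuous c) {C : ℝ} (hC : ∀ y, ‖c y‖ ≤ C)
    (hf : MemLp f 2 volume) : MemLp (fun y => c y * f y) 2 volume :=
  hf.of_le_mul (hc.aestronglyMeasurable.mul hf.aestronglyMeasurable)
    (Filter.Eventually.of_forall fun y => by
      rw [norm_mul]; exact mul_le_mul_of_nonneg_right (hC y) (norm_nonneg _))

lemma cd_deriv {E : Type*} [NormedAddCommGroup E] [NormedSpace ℝ E]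
    {f : ℝ → E} {n : ℕ} (h : ContDiff ℝ (n+1) f) : ContDiff ℝ n (deriv f) :=
  (contDiff_succ_iff_deriv.mp (by exact_mod_cast h)).2.2

theorem statement_16 (γ μ k s A : ℝ) (hγ : 1 ≤ γ) (hμ : 0 < μ) (hk : 0 < k)
    (P : ℝ → ℝ) (hP : ContDiff ℝ 3 P)
    (hPb : ∃ M : ℝ, ∀ y : ℝ, |P y| ≤ M)
    (hPb1 : ∃ M : ℝ, ∀ y : ℝ, |deriv P y| ≤ M)
    (hPb2 : ∃ M : ℝ, ∀ y : ℝ, |deriv (deriv P) y| ≤ M)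
    (hPinf : ∃ δ > (0:ℝ), ∀ y : ℝ, δ ≤ P y)
    (J f₁ f₂ : ℝ → ℝ)
    (hJ : ∀ y : ℝ, J y = s * P y - A)
    (hf₁ : ∀ y : ℝ, f₁ y = (J y) ^ 2 / (P y) ^ 2 - γ * (P y) ^ (γ - 1))
    (hf₂ : ∀ y : ℝ, f₂ y = s - 2 * J y / P y)
    (lam : ℂ) (hlam : lam ≠ 0)
    (ρt mt : ℝ → ℂ) (hρt : ContDiff ℝ 3 ρt) (hmt : ContDiff ℝ 2 mt)
    (hρtL2 : MemLp ρt 2 volume) (hρt1L2 : MemLp (deriv ρt) 2 volume)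
    (hρt2L2 : MemLp (deriv (deriv ρt)) 2 volume)
    (hρt3L2 : MemLp (deriv (deriv (deriv ρt))) 2 volume)
    (hmtL2 : MemLp mt 2 volume) (hmt1L2 : MemLp (deriv mt) 2 volume)
    (hmt2L2 : MemLp (deriv (deriv mt)) 2 volume)
    (heq1 : ∀ y : ℝ, (s : ℂ) * deriv ρt y - deriv mt y = lam * ρt y)
    (heq2 : ∀ y : ℝ,
      (s : ℂ) * deriv mt y
        + deriv (fun t => (((J t) ^ 2 / (P t) ^ 2 : ℝ) : ℂ) * ρt t) y
        - deriv (fun t => ((2 * J t / P t : ℝ) : ℂ) * mt t) y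
        - (γ : ℂ) * deriv (fun t => (((P t) ^ (γ - 1) : ℝ) : ℂ) * ρt t) y
        + (μ : ℂ) * deriv (deriv mt) y
        + ((k ^ 2 / 2 : ℝ) : ℂ) * deriv (deriv (deriv ρt)) y
        - 2 * (k ^ 2 : ℂ) * deriv (fun t =>
            ((deriv (fun u => Real.sqrt (P u)) t : ℝ) : ℂ)
              * deriv (fun u => ρt u / ((Real.sqrt (P u) : ℝ) : ℂ)) t) y
      = lam * mt y)
    (ρ m : ℝ → ℂ)
    (hρ : ∀ y : ℝ, ρ y = ((s : ℂ) * ρt y - mt y) / lam)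
    (hm : ∀ y : ℝ, m y =
      (((f₁ y : ℝ) : ℂ) * ρt y + ((f₂ y : ℝ) : ℂ) * mt y + (μ : ℂ) * deriv mt y
        + ((k ^ 2 / 2 : ℝ) : ℂ) * deriv (deriv ρt) y
        - 2 * (k ^ 2 : ℂ) * ((deriv (fun u => Real.sqrt (P u)) y : ℝ) : ℂ)
            * deriv (fun u => ρt u / ((Real.sqrt (P u) : ℝ) : ℂ)) y) / lam) :
    MemLp ρ 2 volume ∧ MemLp m 2 volume ∧
    (∀ y : ℝ, deriv ρ y = ρt y) ∧ (∀ y : ℝ, deriv m y = mt y) ∧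
    (∀ y : ℝ, lam * ρ y = (s : ℂ) * deriv ρ y - deriv m y) ∧
    (∀ y : ℝ, lam * m y =
      ((f₁ y : ℝ) : ℂ) * deriv ρ y + ((f₂ y : ℝ) : ℂ) * deriv m y
        + (μ : ℂ) * deriv (deriv m) y
        + ((k ^ 2 / 2 : ℝ) : ℂ) * deriv (deriv (deriv ρ)) y
        - 2 * (k ^ 2 : ℂ) * ((deriv (fun u => Real.sqrt (P u)) y : ℝ) : ℂ)
            * deriv (fun u => deriv ρ u / ((Real.sqrt (P u) : ℝ) : ℂ)) y) := by
  obtain ⟨MP, hMP⟩ := hPb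
  obtain ⟨M1, hM1⟩ := hPb1
  obtain ⟨δ, hδ, hδP⟩ := hPinf
  have hPpos : ∀ y, 0 < P y := fun y => hδ.trans_le (hδP y)
  have hPne : ∀ y, P y ≠ 0 := fun y => (hPpos y).ne'
  have hPd : Differentiable ℝ P := hP.differentiable (by norm_num)
  have hρtd : Differentiable ℝ ρt := hρt.differentiable (by norm_num)
  have hmtd : Differentiable ℝ mt := hmt.differentiable (by norm_num)
  have hρt1cd : ContDiff ℝ 2 (deriv ρt) := cd_deriv (n := 2) (by exact_mod_cast hρt)
  have hρt1d : Differentiable ℝ (deriv ρt) := hρt1cd.differentiable (by norm_num)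
  have hρt2cd : ContDiff ℝ 1 (deriv (deriv ρt)) := cd_deriv (n := 1) (by exact_mod_cast hρt1cd)
  have hρt2d : Differentiable ℝ (deriv (deriv ρt)) := hρt2cd.differentiable (by norm_num)
  have hmt1cd : ContDiff ℝ 1 (deriv mt) := cd_deriv (n := 1) (by exact_mod_cast hmt)
  have hmt1d : Differentiable ℝ (deriv mt) := hmt1cd.differentiable (by norm_num)
  -- J, f₁, f₂ as functions
  have hJd : Differentiable ℝ J := by
    rw [funext hJ]; exact (hPd.const_mul s).sub_const A
  -- sqrt facts
  have hsq : ContDiff ℝ 3 (fun u => Real.sqrt (P u)) := by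
    rw [contDiff_iff_contDiffAt]; intro y
    exact (Real.contDiffAt_sqrt (hPne y)).comp y hP.contDiffAt
  have hsqd : Differentiable ℝ (fun u => Real.sqrt (P u)) := hsq.differentiable (by norm_num)
  have hsq1cd : ContDiff ℝ 2 (deriv (fun u => Real.sqrt (P u))) :=
    cd_deriv (n := 2) (by exact_mod_cast hsq)
  have hsq1d : Differentiable ℝ (deriv (fun u => Real.sqrt (P u))) :=
    hsq1cd.differentiable (by norm_num)
  have hsqpos : ∀ u, 0 < Real.sqrt (P u) := fun u => Real.sqrt_pos.mpr (hPpos u)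
  have hsqCne : ∀ u, ((Real.sqrt (P u) : ℝ) : ℂ) ≠ 0 := fun u =>
    Complex.ofReal_ne_zero.mpr (hsqpos u).ne'
  have hsqC : ContDiff ℝ 3 (fun u => ((Real.sqrt (P u) : ℝ) : ℂ)) :=
    Complex.ofRealCLM.contDiff.comp hsq
  have hqe : (fun u => ρt u / ((Real.sqrt (P u) : ℝ) : ℂ))
      = fun u => ρt u * (((Real.sqrt (P u))⁻¹ : ℝ) : ℂ) :=
    funext fun u => by rw [div_eq_mul_inv, Complex.ofReal_inv]
  have hq : ContDiff ℝ 3 (fun u => ρt u / ((Real.sqrt (P u) : ℝ) : ℂ)) := by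
    rw [hqe]
    exact hρt.mul (Complex.ofRealCLM.contDiff.comp (hsq.inv fun u => (hsqpos u).ne'))
  have hq1cd : ContDiff ℝ 2 (deriv (fun u => ρt u / ((Real.sqrt (P u) : ℝ) : ℂ))) :=
    cd_deriv (n := 2) (by exact_mod_cast hq)
  have hq1d : Differentiable ℝ (deriv (fun u => ρt u / ((Real.sqrt (P u) : ℝ) : ℂ))) :=
    hq1cd.differentiable (by norm_num)
  -- deriv ρ = ρt
  have hρeq : ρ = fun y => ((s : ℂ) * ρt y - mt y) * lam⁻¹ :=
    funext fun y => by rw [hρ y, div_eq_mul_inv]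
  have hdρ : ∀ y, deriv ρ y = ρt y := by
    intro y
    have H : HasDerivAt (fun y => ((s : ℂ) * ρt y - mt y) * lam⁻¹)
        (((s : ℂ) * deriv ρt y - deriv mt y) * lam⁻¹) y := by
      exact (((hρtd y).hasDerivAt.const_mul (s : ℂ)).sub (hmtd y).hasDerivAt).mul_const lam⁻¹
    rw [hρeq, H.deriv, heq1 y, mul_comm lam, mul_assoc, mul_inv_cancel₀ hlam, mul_one]
  -- differentiability of the coefficient functions appearing in heq2
  have hd1 : Differentiable ℝ (fun t => (((J t) ^ 2 / (P t) ^ 2 : ℝ) : ℂ) * ρt t) :=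
    (Complex.ofRealCLM.differentiable.comp
      ((hJd.pow 2).div (hPd.pow 2) fun t => pow_ne_zero 2 (hPne t))).mul hρtd
  have hd2 : Differentiable ℝ (fun t => ((2 * J t / P t : ℝ) : ℂ) * mt t) :=
    (Complex.ofRealCLM.differentiable.comp
      ((hJd.const_mul 2).div hPd hPne)).mul hmtd
  have hd3 : Differentiable ℝ (fun t => (((P t) ^ (γ - 1) : ℝ) : ℂ) * ρt t) :=
    (Complex.ofRealCLM.differentiable.comp
      (fun t => (hPd t).rpow_const (Or.inl (hPne t)))).mul hρtd
  have hd4 : Differentiable ℝ (fun t =>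
      ((deriv (fun u => Real.sqrt (P u)) t : ℝ) : ℂ)
        * deriv (fun u => ρt u / ((Real.sqrt (P u) : ℝ) : ℂ)) t) :=
    (Complex.ofRealCLM.differentiable.comp hsq1d).mul hq1d
  -- deriv m = mt
  have hmeq : m = fun y =>
      ((fun t => (((J t) ^ 2 / (P t) ^ 2 : ℝ) : ℂ) * ρt t) y
        - (γ : ℂ) * (fun t => (((P t) ^ (γ - 1) : ℝ) : ℂ) * ρt t) y
        + ((s : ℂ) * mt y - (fun t => ((2 * J t / P t : ℝ) : ℂ) * mt t) y)
        + (μ : ℂ) * deriv mt y + ((k ^ 2 / 2 : ℝ) : ℂ) * deriv (deriv ρt) y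
        - 2 * (k ^ 2 : ℂ) * (fun t =>
            ((deriv (fun u => Real.sqrt (P u)) t : ℝ) : ℂ)
              * deriv (fun u => ρt u / ((Real.sqrt (P u) : ℝ) : ℂ)) t) y) * lam⁻¹ := by
    funext y
    rw [hm y, hf₁ y, hf₂ y, div_eq_mul_inv]
    simp only []
    push_cast
    ring
  have hdm : ∀ y, deriv m y = mt y := by
    intro y
    have H : HasDerivAt (fun y =>
        ((fun t => (((J t) ^ 2 / (P t) ^ 2 : ℝ) : ℂ) * ρt t) y
          - (γ : ℂ) * (fun t => (((P t) ^ (γ - 1) : ℝ) : ℂ) * ρt t) y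
          + ((s : ℂ) * mt y - (fun t => ((2 * J t / P t : ℝ) : ℂ) * mt t) y)
          + (μ : ℂ) * deriv mt y + ((k ^ 2 / 2 : ℝ) : ℂ) * deriv (deriv ρt) y
          - 2 * (k ^ 2 : ℂ) * (fun t =>
              ((deriv (fun u => Real.sqrt (P u)) t : ℝ) : ℂ)
                * deriv (fun u => ρt u / ((Real.sqrt (P u) : ℝ) : ℂ)) t) y) * lam⁻¹)
        ((deriv (fun t => (((J t) ^ 2 / (P t) ^ 2 : ℝ) : ℂ) * ρt t) y
          - (γ : ℂ) * deriv (fun t => (((P t) ^ (γ - 1) : ℝ) : ℂ) * ρt t) y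
          + ((s : ℂ) * deriv mt y - deriv (fun t => ((2 * J t / P t : ℝ) : ℂ) * mt t) y)
          + (μ : ℂ) * deriv (deriv mt) y + ((k ^ 2 / 2 : ℝ) : ℂ) * deriv (deriv (deriv ρt)) y
          - 2 * (k ^ 2 : ℂ) * deriv (fun t =>
              ((deriv (fun u => Real.sqrt (P u)) t : ℝ) : ℂ)
                * deriv (fun u => ρt u / ((Real.sqrt (P u) : ℝ) : ℂ)) t) y) * lam⁻¹) y := by
      exact ((((((hd1 y).hasDerivAt.sub (((hd3 y).hasDerivAt).const_mul (γ : ℂ))).add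
        (((hmtd y).hasDerivAt.const_mul (s : ℂ)).sub (hd2 y).hasDerivAt)).add
        ((hmt1d y).hasDerivAt.const_mul (μ : ℂ))).add
        ((hρt2d y).hasDerivAt.const_mul ((k ^ 2 / 2 : ℝ) : ℂ))).sub
        (((hd4 y).hasDerivAt).const_mul (2 * (k ^ 2 : ℂ)))).mul_const lam⁻¹
    rw [hmeq, H.deriv]
    have h3 : mt y = (lam * mt y) * lam⁻¹ := by
      rw [mul_comm lam, mul_assoc, mul_inv_cancel₀ hlam, mul_one]
    rw [h3]
    congr 1
    linear_combination heq2 y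
  -- bounds
  have hPle : ∀ y, P y ≤ MP := fun y => (le_abs_self _).trans (hMP y)
  have hMPpos : 0 < MP := hδ.trans_le ((hδP 0).trans (hPle 0))
  have hJb : ∀ y, |J y| ≤ |s| * MP + |A| := fun y => by
    rw [hJ y]
    calc |s * P y - A| ≤ |s * P y| + |A| := abs_sub _ _
      _ = |s| * |P y| + |A| := by rw [abs_mul]
      _ ≤ |s| * MP + |A| := by gcongr <;> first | exact abs_nonneg s | exact hMP y
  have hsqδpos : 0 < Real.sqrt δ := Real.sqrt_pos.mpr hδ
  have M1nn : 0 ≤ M1 := (abs_nonneg _).trans (hM1 0)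
  have hc3d : Differentiable ℝ (fun t => (P t) ^ (γ - 1)) :=
    fun t => (hPd t).rpow_const (Or.inl (hPne t))
  have hf₁d : Differentiable ℝ f₁ := by
    rw [funext hf₁]
    exact ((hJd.pow 2).div (hPd.pow 2) fun t => pow_ne_zero 2 (hPne t)).sub (hc3d.const_mul γ)
  have hf₂d : Differentiable ℝ f₂ := by
    rw [funext hf₂]
    exact (differentiable_const s).sub ((hJd.const_mul 2).div hPd hPne)
  have hrpowb : ∀ y, (P y) ^ (γ - 1) ≤ (max MP 1) ^ (γ - 1) := fun y =>
    Real.rpow_le_rpow (hPpos y).le ((hPle y).trans (le_max_left _ _)) (by linarith)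
  have hf₁b : ∀ y, |f₁ y| ≤ (|s| * MP + |A|) ^ 2 / δ ^ 2 + γ * (max MP 1) ^ (γ - 1) := by
    intro y
    rw [hf₁ y]
    calc |J y ^ 2 / P y ^ 2 - γ * P y ^ (γ - 1)|
        ≤ |J y ^ 2 / P y ^ 2| + |γ * P y ^ (γ - 1)| := abs_sub _ _
      _ ≤ (|s| * MP + |A|) ^ 2 / δ ^ 2 + γ * (max MP 1) ^ (γ - 1) := by
          refine add_le_add ?_ ?_
          · rw [abs_div, abs_pow, abs_pow, abs_of_pos (hPpos y)]
            gcongr <;> first | exact (abs_nonneg _).trans (hJb y) | exact hJb y | exact hδP y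
          · rw [abs_mul, abs_of_nonneg (by linarith : (0:ℝ) ≤ γ),
              abs_of_nonneg (Real.rpow_nonneg (hPpos y).le _)]
            exact mul_le_mul_of_nonneg_left (hrpowb y) (by linarith)
  have hf₂b : ∀ y, |f₂ y| ≤ |s| + 2 * (|s| * MP + |A|) / δ := by
    intro y
    rw [hf₂ y]
    calc |s - 2 * J y / P y| ≤ |s| + |2 * J y / P y| := abs_sub _ _
      _ ≤ |s| + 2 * (|s| * MP + |A|) / δ := by
          refine add_le_add le_rfl ?_
          rw [abs_div, abs_mul, abs_of_pos (hPpos y), abs_of_nonneg (by norm_num : (0:ℝ) ≤ 2)]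
          gcongr <;> first | positivity | exact hJb y | exact hδP y | exact hδ
  -- derivative of sqrt and of the quotient
  have hsqderiv : ∀ y, deriv (fun u => Real.sqrt (P u)) y = deriv P y / (2 * Real.sqrt (P y)) :=
    fun y => deriv_sqrt (hPd y) (hPne y)
  have hsq'b : ∀ y, |deriv (fun u => Real.sqrt (P u)) y| ≤ M1 / (2 * Real.sqrt δ) := by
    intro y
    rw [hsqderiv y, abs_div, abs_of_pos (mul_pos two_pos (hsqpos y))]
    exact div_le_div₀ ((abs_nonneg _).trans (hM1 y)) (hM1 y) (mul_pos two_pos hsqδpos)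
      (mul_le_mul_of_nonneg_left (Real.sqrt_le_sqrt (hδP y)) (by norm_num))
  have hsqCd : ∀ y, HasDerivAt (fun u => ((Real.sqrt (P u) : ℝ) : ℂ))
      ((deriv (fun u => Real.sqrt (P u)) y : ℝ) : ℂ) y :=
    fun y => ((hsqd y).hasDerivAt).ofReal_comp
  have hqderiv : ∀ y, deriv (fun u => ρt u / ((Real.sqrt (P u) : ℝ) : ℂ)) y
      = (deriv ρt y * ((Real.sqrt (P y) : ℝ) : ℂ)
          - ρt y * ((deriv (fun u => Real.sqrt (P u)) y : ℝ) : ℂ)) / ((P y : ℝ) : ℂ) := by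
    intro y
    rw [deriv_fun_div (hρtd y) (hsqCd y).differentiableAt (hsqCne y), (hsqCd y).deriv]
    congr 1
    rw [← Complex.ofReal_pow, Real.sq_sqrt (hPpos y).le]
  refine ⟨?_, ?_, hdρ, hdm, ?_, ?_⟩
  · have hrepr : ρ = fun y => lam⁻¹ * ((s : ℂ) * ρt y - mt y) :=
      funext fun y => by rw [hρ y]; ring
    rw [hrepr]
    exact ((hρtL2.const_mul (s : ℂ)).sub hmtL2).const_mul lam⁻¹
  · have hrepr : m = fun y => lam⁻¹ *
        (((f₁ y : ℝ) : ℂ) * ρt y + ((f₂ y : ℝ) : ℂ) * mt y + (μ : ℂ) * deriv mt y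
          + ((k ^ 2 / 2 : ℝ) : ℂ) * deriv (deriv ρt) y
          + (((-(2 * k ^ 2 * (deriv (fun u => Real.sqrt (P u)) y * Real.sqrt (P y) / P y)) : ℝ) : ℂ)
              * deriv ρt y
            + ((2 * k ^ 2 * ((deriv (fun u => Real.sqrt (P u)) y) ^ 2 / P y) : ℝ) : ℂ) * ρt y)) := by
      funext y
      have hPCne : ((P y : ℝ) : ℂ) ≠ 0 := Complex.ofReal_ne_zero.mpr (hPne y)
      rw [hm y, hqderiv y]
      push_cast
      field_simp
      ring
    rw [hrepr]
    have hsq'c : Continuous (deriv (fun u => Real.sqrt (P u))) := hsq1cd.continuous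
    have hT1 : MemLp (fun y => ((f₁ y : ℝ) : ℂ) * ρt y) 2 volume :=
      mulL2 (Complex.continuous_ofReal.comp hf₁d.continuous)
        (fun y => by rw [Complex.norm_real, Real.norm_eq_abs]; exact hf₁b y) hρtL2
    have hT2 : MemLp (fun y => ((f₂ y : ℝ) : ℂ) * mt y) 2 volume :=
      mulL2 (Complex.continuous_ofReal.comp hf₂d.continuous)
        (fun y => by rw [Complex.norm_real, Real.norm_eq_abs]; exact hf₂b y) hmtL2
    have hTa : MemLp (fun y =>
        ((-(2 * k ^ 2 * (deriv (fun u => Real.sqrt (P u)) y * Real.sqrt (P y) / P y)) : ℝ) : ℂ)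
          * deriv ρt y) 2 volume := by
      refine mulL2 (Complex.continuous_ofReal.comp ?_)
        (C := 2 * k ^ 2 * (M1 / (2 * Real.sqrt δ) * Real.sqrt MP / δ)) ?_ hρt1L2
      · exact (continuous_const.mul ((hsq'c.mul hsq.continuous).div hP.continuous hPne)).neg
      · intro y
        rw [Complex.norm_real, Real.norm_eq_abs, abs_neg, abs_mul,
          abs_of_nonneg (by positivity : (0:ℝ) ≤ 2 * k ^ 2), abs_div, abs_mul,
          abs_of_pos (hPpos y), abs_of_nonneg (Real.sqrt_nonneg _)]
        gcongr <;> first | positivity | exact hsq'b y | exact Real.sqrt_le_sqrt (hPle y) | exact hδP y | exact hδ | exact hsqδpos | exact hPle y | exact mul_nonneg (div_nonneg M1nn (by positivity)) (Real.sqrt_nonneg _) | exact div_nonneg M1nn (by positivity)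
    have hTb : MemLp (fun y =>
        ((2 * k ^ 2 * ((deriv (fun u => Real.sqrt (P u)) y) ^ 2 / P y) : ℝ) : ℂ) * ρt y) 2 volume := by
      refine mulL2 (Complex.continuous_ofReal.comp ?_)
        (C := 2 * k ^ 2 * ((M1 / (2 * Real.sqrt δ)) ^ 2 / δ)) ?_ hρtL2
      · exact continuous_const.mul ((hsq'c.pow 2).div hP.continuous hPne)
      · intro y
        rw [Complex.norm_real, Real.norm_eq_abs, abs_mul,
          abs_of_nonneg (by positivity : (0:ℝ) ≤ 2 * k ^ 2), abs_div, abs_pow,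
          abs_of_pos (hPpos y)]
        gcongr <;> first | positivity | exact hsq'b y | exact hδP y | exact hδ | exact hsqδpos | exact hPle y | exact mul_nonneg (div_nonneg M1nn (by positivity)) (Real.sqrt_nonneg _) | exact div_nonneg M1nn (by positivity)
    exact (((((hT1.add hT2).add (hmt1L2.const_mul (μ : ℂ))).add
      (hρt2L2.const_mul ((k ^ 2 / 2 : ℝ) : ℂ))).add (hTa.add hTb)).const_mul lam⁻¹)
  · intro y
    rw [hdρ y, hdm y, hρ y]
    field_simp
  · intro y
    have hρfun : deriv ρ = ρt := funext hdρ
    have hmfun : deriv m = mt := funext hdm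
    rw [hρfun, hmfun, hm y, mul_comm, div_mul_cancel₀ _ hlam]
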